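/- Let A be a measurable set with μ(A) = ∞ and let (A_n)_{n≥1} be a sequence of measurable sets with μ(A_n) < ∞ for every n, such that (A_n) →_μ A and, for all n < m: μ(A_n \ A_m) ≤ 2^{-n}, μ((A_m ∩ C_n) \ A_n) ≤ 2^{-n}, and μ(A_n) ≥ 2^n. Then μ(A △ liminf_n A_n) = 0 and μ(A △ limsup_n A_n) = 0, where △ denotes symmetric difference, liminf_n A_n = ⋃_n ⋂_{m≥n} A_m and limsup_n A_n = ⋂_n ⋃_{m≥n} A_m. -/

import Mathlib

open MeasureTheory Filter Set
open scoped ENNReal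

/-- The limit relation `→_μ`: `(A n) →_μ L` iff `μ (A n \ L) → 0` and, for every
measurable `B` of finite measure, `μ ((L ∩ B) \ A n) → 0`. -/
def ConvMu {Ω : Type*} [MeasurableSpace Ω] (μ : Measure Ω)
    (A : ℕ → Set Ω) (L : Set Ω) : Prop :=
  Tendsto (fun n => μ (A n \ L)) atTop (nhds 0) ∧
    ∀ B : Set Ω, MeasurableSet B → μ B < ⊤ →
      Tendsto (fun n => μ ((L ∩ B) \ A n)) atTop (nhds 0)

/-- Let `(C n)` be increasing with `C 0 = ∅`, `μ (C n) < ∞`,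
`μ (C (n+1) \ C n) ≥ 2^(n+1)` and `⋃ n, C n = Ω`.  If `μ A = ∞`, each `μ (A n) < ∞`,
`(A n) →_μ A`, and for all `1 ≤ n < m`: `μ (A n \ A m) ≤ 2⁻ⁿ`,
`μ ((A m ∩ C n) \ A n) ≤ 2⁻ⁿ` and `μ (A n) ≥ 2ⁿ`, then `A` equals both
`liminf A n` and `limsup A n` up to `μ`-null sets. -/
theorem statement2 {Ω : Type*} [MeasurableSpace Ω] (μ : Measure Ω)
    (C : ℕ → Set Ω) (hCmeas : ∀ n, MeasurableSet (C n)) (hCmono : Monotone C)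
    (hC0 : C 0 = ∅) (hCfin : ∀ n, μ (C n) < ⊤)
    (hCgrow : ∀ n, (2 : ℝ≥0∞) ^ (n + 1) ≤ μ (C (n + 1) \ C n))
    (hCunion : (⋃ n, C n) = Set.univ)
    (A : Set Ω) (hA : MeasurableSet A) (hAinf : μ A = ⊤)
    (Aseq : ℕ → Set Ω) (hAseq : ∀ n, MeasurableSet (Aseq n))
    (hAseqfin : ∀ n, μ (Aseq n) < ⊤)
    (hconv : ConvMu μ Aseq A)
    (hc1 : ∀ n m, 1 ≤ n → n < m → μ (Aseq n \ Aseq m) ≤ (2 : ℝ≥0∞)⁻¹ ^ n)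
    (hc2 : ∀ n m, 1 ≤ n → n < m → μ ((Aseq m ∩ C n) \ Aseq n) ≤ (2 : ℝ≥0∞)⁻¹ ^ n)
    (hc3 : ∀ n, 1 ≤ n → (2 : ℝ≥0∞) ^ n ≤ μ (Aseq n)) :
    μ (symmDiff A (⋃ n, ⋂ m, ⋂ _ : n ≤ m, Aseq m)) = 0 ∧
    μ (symmDiff A (⋂ n, ⋃ m, ⋃ _ : n ≤ m, Aseq m)) = 0 := by
  set f : ℕ → ℝ≥0∞ := fun j => ((2:ℝ≥0∞)⁻¹)^j with hf
  set b : ℕ → ℝ≥0∞ := fun n => ∑' j : ℕ, f (j + n) with hb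
  have hfsum : (∑' j : ℕ, f j) ≠ ⊤ := by
    rw [hf, ENNReal.tsum_geometric]
    simp [ENNReal.one_sub_inv_two]
  have hb0 : Tendsto b atTop (nhds 0) := ENNReal.tendsto_sum_nat_add f hfsum
  set Linf := ⋃ n, ⋂ m, ⋂ _ : n ≤ m, Aseq m with hLinf
  set Lsup := ⋂ n, ⋃ m, ⋃ _ : n ≤ m, Aseq m with hLsup
  -- each term of the sequence is almost contained in A, with rate
  have h1 : ∀ m, 1 ≤ m → μ (Aseq m \ A) ≤ f m := by
    intro m hm
    have key : ∀ᶠ M in atTop, μ (Aseq m \ A) ≤ f m + μ (Aseq M \ A) := by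
      filter_upwards [eventually_gt_atTop m] with M hM
      have hsub : Aseq m \ A ⊆ (Aseq m \ Aseq M) ∪ (Aseq M \ A) := by
        intro x hx
        by_cases h : x ∈ Aseq M
        · exact Or.inr ⟨h, hx.2⟩
        · exact Or.inl ⟨hx.1, h⟩
      calc μ (Aseq m \ A) ≤ μ (Aseq m \ Aseq M) + μ (Aseq M \ A) :=
            le_trans (measure_mono hsub) (measure_union_le _ _)
        _ ≤ f m + μ (Aseq M \ A) := by
            exact add_le_add_left (hc1 m M hm hM) _
    have hlim : Tendsto (fun M => f m + μ (Aseq M \ A)) atTop (nhds (f m + 0)) :=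
      tendsto_const_nhds.add hconv.1
    simpa using ge_of_tendsto hlim key
  -- telescoping: Aseq n \ Aseq m is inside the union of consecutive differences
  have htel : ∀ m n, n ≤ m →
      Aseq n \ Aseq m ⊆ ⋃ j, ⋃ _ : n ≤ j, Aseq j \ Aseq (j+1) := by
    intro m
    induction m with
    | zero => intro n hn; interval_cases n; simp
    | succ m ih =>
        intro n hn
        rcases Nat.lt_or_ge n (m+1) with h | h
        · have hnm : n ≤ m := Nat.lt_succ_iff.mp h
          intro x hx
          by_cases hxm : x ∈ Aseq m
          · exact mem_iUnion.mpr ⟨m, mem_iUnion.mpr ⟨hnm, hxm, hx.2⟩⟩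
          · exact ih n hnm ⟨hx.1, hxm⟩
        · have : n = m + 1 := le_antisymm hn h
          subst this; simp
  -- measure of a tail union is bounded by the tail sum
  have htailU : ∀ (S : ℕ → Set Ω) (n : ℕ), (∀ j, n ≤ j → μ (S j) ≤ f j) →
      μ (⋃ j, ⋃ _ : n ≤ j, S j) ≤ b n := by
    intro S n hS
    have heq : (⋃ j, ⋃ _ : n ≤ j, S j) = ⋃ i : ℕ, S (i + n) := by
      ext x; simp only [mem_iUnion]
      constructor
      · rintro ⟨j, hj, hx⟩; exact ⟨j - n, by rwa [Nat.sub_add_cancel hj]⟩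
      · rintro ⟨i, hx⟩; exact ⟨i + n, Nat.le_add_left _ _, hx⟩
    rw [heq]
    refine le_trans (measure_iUnion_le _) (ENNReal.tsum_le_tsum fun i => ?_)
    exact hS (i + n) (Nat.le_add_left _ _)
  -- μ (Lsup \ A) = 0
  have hsupA : μ (Lsup \ A) = 0 := by
    have key : ∀ n : ℕ, μ (Lsup \ A) ≤ b (n+1) := by
      intro n
      have hsub : Lsup \ A ⊆ ⋃ j, ⋃ _ : n+1 ≤ j, Aseq j \ A := by
        intro x hx
        have hx1 : x ∈ ⋃ m, ⋃ _ : n+1 ≤ m, Aseq m := mem_iInter.mp hx.1 (n+1)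
        rcases mem_iUnion.mp hx1 with ⟨m, hm⟩
        rcases mem_iUnion.mp hm with ⟨hnm, hxm⟩
        exact mem_iUnion.mpr ⟨m, mem_iUnion.mpr ⟨hnm, hxm, hx.2⟩⟩
      exact le_trans (measure_mono hsub)
        (htailU _ (n+1) fun j hj => h1 j (le_trans (Nat.le_add_left 1 n) hj))
    have : Tendsto (fun n : ℕ => b (n+1)) atTop (nhds 0) :=
      hb0.comp (tendsto_add_atTop_nat 1)
    exact le_antisymm (ge_of_tendsto this (Eventually.of_forall key)) zero_le
  -- Linf ⊆ Lsup
  have hLL : Linf ⊆ Lsup := by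
    intro x hx
    rcases mem_iUnion.mp hx with ⟨n, hn⟩
    refine mem_iInter.mpr fun n' => mem_iUnion.mpr ⟨max n n', mem_iUnion.mpr
      ⟨le_max_right _ _, ?_⟩⟩
    exact mem_iInter.mp (mem_iInter.mp hn (max n n')) (le_max_left _ _)
  -- μ ((A ∩ C k) \ Linf) = 0 for each k
  have hk : ∀ k, μ ((A ∩ C k) \ Linf) = 0 := by
    intro k
    have hg : Tendsto (fun n => μ ((A ∩ C k) \ Aseq n)) atTop (nhds 0) :=
      hconv.2 (C k) (hCmeas k) (hCfin k)
    have key : ∀ n : ℕ,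
        μ ((A ∩ C k) \ Linf) ≤ μ ((A ∩ C k) \ Aseq (n+1)) + b (n+1) := by
      intro n
      have hsub : (A ∩ C k) \ Linf ⊆
          ((A ∩ C k) \ Aseq (n+1)) ∪ ⋃ j, ⋃ _ : n+1 ≤ j, Aseq j \ Aseq (j+1) := by
        intro x hx
        by_cases hxn : x ∈ Aseq (n+1)
        · have : x ∉ ⋂ m, ⋂ _ : n+1 ≤ m, Aseq m := fun h =>
            hx.2 (mem_iUnion.mpr ⟨n+1, h⟩)
          have : ∃ m, n+1 ≤ m ∧ x ∉ Aseq m := by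
            by_contra hc
            push_neg at hc
            exact this (mem_iInter.mpr fun m => mem_iInter.mpr fun hm => hc m hm)
          rcases this with ⟨m, hnm, hxm⟩
          exact Or.inr (htel m (n+1) hnm ⟨hxn, hxm⟩)
        · exact Or.inl ⟨hx.1, hxn⟩
      calc μ ((A ∩ C k) \ Linf)
          ≤ μ ((A ∩ C k) \ Aseq (n+1)) +
            μ (⋃ j, ⋃ _ : n+1 ≤ j, Aseq j \ Aseq (j+1)) :=
            le_trans (measure_mono hsub) (measure_union_le _ _)
        _ ≤ μ ((A ∩ C k) \ Aseq (n+1)) + b (n+1) := by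
            refine add_le_add_right (htailU _ (n+1) fun j hj => ?_) _
            exact hc1 j (j+1) (le_trans (Nat.le_add_left 1 n) hj) (Nat.lt_succ_self j)
    have hlim : Tendsto (fun n : ℕ => μ ((A ∩ C k) \ Aseq (n+1)) + b (n+1))
        atTop (nhds 0) := by
      have := (hg.comp (tendsto_add_atTop_nat 1)).add (hb0.comp (tendsto_add_atTop_nat 1))
      simpa using this
    exact le_antisymm (ge_of_tendsto hlim (Eventually.of_forall key)) zero_le
  -- μ (A \ Linf) = 0
  have hALinf : μ (A \ Linf) = 0 := by
    have hsub : A \ Linf ⊆ ⋃ k, (A ∩ C k) \ Linf := by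
      intro x hx
      have : x ∈ ⋃ k, C k := hCunion ▸ mem_univ x
      rcases mem_iUnion.mp this with ⟨k, hkx⟩
      exact mem_iUnion.mpr ⟨k, ⟨hx.1, hkx⟩, hx.2⟩
    exact measure_mono_null hsub (measure_iUnion_null hk)
  have hALsup : μ (A \ Lsup) = 0 :=
    measure_mono_null (diff_subset_diff_right hLL) hALinf
  have hLinfA : μ (Linf \ A) = 0 :=
    measure_mono_null (diff_subset_diff_left hLL) hsupA
  constructor
  · rw [symmDiff_def]
    exact measure_union_null hALinf hLinfA
  · rw [symmDiff_def]
    exact measure_union_null hALsup hsupA
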